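/- Let G be a group generated by a finite symmetric set S, let d, w ∈ ℕ, and let A be a d×d matrix over ℂ[G] whose entries all have support contained in B_w. Let (F_n) be a Følner exhaustion of G such that dim V(F_n)/|F_n| → c ∈ ℝ. Then for every sequence (Y_k) of nonempty finite subsets of G satisfying |Ω_L(Y_k)|/|Y_k| → 1 as k → ∞ for every L ∈ ℕ, one has dim V(Y_k)/|Y_k| → c as k → ∞. -/

import Mathlib

open Pointwise Filter Topology

section Defs

variable {G : Type*} [Group G]

/-- The word ball of radius `k` with respect to the generating set `S`. -/
noncomputable def wball (S : Finset G) (k : ℕ) : Finset G :=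
  letI := Classical.decEq G
  (insert (1 : G) S) ^ k

/-- The `k`-neighborhood `B_k(F) = B_k * F` of a finite set `F`. -/
noncomputable def wnbhd (S : Finset G) (k : ℕ) (F : Finset G) : Finset G :=
  letI := Classical.decEq G
  wball S k * F

/-- The `k`-interior `Ω_k(F)` of a finite set `F`. -/
noncomputable def winter (S : Finset G) (k : ℕ) (F : Finset G) : Finset G :=
  letI := Classical.decEq G
  F.filter fun p => wball S k * {p} ⊆ F

/-- The boundary `∂F` of a finite set `F`. -/
noncomputable def wbdry (S : Finset G) (F : Finset G) : Finset G :=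
  letI := Classical.decEq G
  F.filter fun p => ∃ s ∈ S, s * p ∉ F

/-- `S` is a finite symmetric generating set. -/
def IsSymmGen (S : Finset G) : Prop :=
  (∀ s ∈ S, s⁻¹ ∈ S) ∧ Subgroup.closure (S : Set G) = ⊤

/-- A Følner exhaustion of `G`. -/
def IsFolnerExhaustion (S : Finset G) (F : ℕ → Finset G) : Prop :=
  (1 : G) ∈ F 0 ∧ Monotone F ∧ (∀ g : G, ∃ n, g ∈ F n) ∧
    Filter.Tendsto (fun n => ((wbdry S (F n)).card : ℝ) / ((F n).card : ℝ))
      Filter.atTop (nhds 0)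

variable {d : ℕ}

/-- The space of vectors supported in `Fs` such that `A.mulVec f` vanishes on `Fv`. -/
noncomputable def kerOn (A : Matrix (Fin d) (Fin d) (MonoidAlgebra ℂ G))
    (Fs Fv : Finset G) : Submodule ℂ (Fin d → MonoidAlgebra ℂ G) where
  carrier := {f | (∀ i, (f i).coeff.support ⊆ Fs) ∧ ∀ i, ∀ g ∈ Fv, (A.mulVec f i).coeff g = 0}
  zero_mem' := ⟨fun i => by simp, fun i g hg => by simp [Matrix.mulVec_zero]⟩
  add_mem' := by
    classical
    rintro f g ⟨hf1, hf2⟩ ⟨hg1, hg2⟩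
    constructor
    · intro i
      exact Finsupp.support_add.trans (Finset.union_subset (hf1 i) (hg1 i))
    · intro i x hx
      have h : A.mulVec (f + g) = A.mulVec f + A.mulVec g := Matrix.mulVec_add A f g
      rw [h]
      show ((A.mulVec f i).coeff + (A.mulVec g i).coeff) x = 0
      rw [Finsupp.add_apply, hf2 i x hx, hg2 i x hx, add_zero]
  smul_mem' := by
    classical
    rintro c f ⟨hf1, hf2⟩
    constructor
    · intro i
      exact (Finsupp.support_smul).trans (hf1 i)
    · intro i x hx
      have h : A.mulVec (c • f) = c • A.mulVec f := Matrix.mulVec_smul A c f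
      rw [h]
      show (c • (A.mulVec f i).coeff) x = 0
      rw [Finsupp.smul_apply, hf2 i x hx, smul_zero]

/-- The space of vectors supported in `Fs` with `A.mulVec f = 0`. -/
noncomputable def kerAll (A : Matrix (Fin d) (Fin d) (MonoidAlgebra ℂ G))
    (Fs : Finset G) : Submodule ℂ (Fin d → MonoidAlgebra ℂ G) where
  carrier := {f | (∀ i, (f i).coeff.support ⊆ Fs) ∧ A.mulVec f = 0}
  zero_mem' := ⟨fun i => by simp, Matrix.mulVec_zero A⟩
  add_mem' := by
    classical
    rintro f g ⟨hf1, hf2⟩ ⟨hg1, hg2⟩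
    exact ⟨fun i => Finsupp.support_add.trans (Finset.union_subset (hf1 i) (hg1 i)),
      by rw [Matrix.mulVec_add, hf2, hg2, add_zero]⟩
  smul_mem' := by
    classical
    rintro c f ⟨hf1, hf2⟩
    exact ⟨fun i => (Finsupp.support_smul).trans (hf1 i),
      by rw [Matrix.mulVec_smul, hf2, smul_zero]⟩

/-- `V(F)`. -/
noncomputable def VSpace (A : Matrix (Fin d) (Fin d) (MonoidAlgebra ℂ G)) (F : Finset G) :
    Submodule ℂ (Fin d → MonoidAlgebra ℂ G) :=
  kerOn A F F

/-- `Z(F)`. -/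
noncomputable def ZSpace (S : Finset G) (w : ℕ) (A : Matrix (Fin d) (Fin d) (MonoidAlgebra ℂ G))
    (F : Finset G) : Submodule ℂ (Fin d → MonoidAlgebra ℂ G) :=
  kerOn A (wnbhd S w F) F

/-- `W(F)`. -/
noncomputable def WSpace (S : Finset G) (w : ℕ) (A : Matrix (Fin d) (Fin d) (MonoidAlgebra ℂ G))
    (F : Finset G) : Submodule ℂ (Fin d → MonoidAlgebra ℂ G) :=
  kerAll A (winter S w F)

/-- `A.mulVec` as a `ℂ`-linear map. -/
noncomputable def mulVecL {R : Type*} [Ring R] [Algebra ℂ R] {d : ℕ}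
    (A : Matrix (Fin d) (Fin d) R) : (Fin d → R) →ₗ[ℂ] (Fin d → R) where
  toFun := A.mulVec
  map_add' := Matrix.mulVec_add A
  map_smul' c v := Matrix.mulVec_smul A c v

/-- Coordinatewise restriction to `F` (multiplication by the indicator of `F`). -/
noncomputable def restrictTo (d : ℕ) (F : Finset G) :
    (Fin d → MonoidAlgebra ℂ G) →ₗ[ℂ] (Fin d → MonoidAlgebra ℂ G) :=
  letI := Classical.decEq G
  { toFun := fun f i => MonoidAlgebra.ofCoeff ((f i).coeff.filter (· ∈ F))
    map_add' := fun f g => by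
      funext i
      exact congrArg MonoidAlgebra.ofCoeff Finsupp.filter_add
    map_smul' := fun c f => by
      funext i
      exact congrArg MonoidAlgebra.ofCoeff Finsupp.filter_smul }

end Defs

section Tiling

variable {ι α : Type*}

/-- An `ε`-disjoint family of finite sets. -/
def EpsDisjoint (I : Finset ι) (A : ι → Finset α) (ε : ℝ) : Prop :=
  ∃ Ab : ι → Finset α, (∀ i ∈ I, Ab i ⊆ A i) ∧
    (∀ i ∈ I, ((1 - ε) * (A i).card : ℝ) ≤ ((Ab i).card : ℝ)) ∧
    ∀ i ∈ I, ∀ j ∈ I, i ≠ j → Disjoint (Ab i) (Ab j)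

/-- The family `(A i)_{i ∈ I}` `a`-covers `X`. -/
def CoversFrac (I : Finset ι) (A : ι → Finset α) (X : Finset α) (a : ℝ) : Prop :=
  letI := Classical.decEq α
  (a * X.card : ℝ) ≤ ((X ∩ I.biUnion A).card : ℝ)

/-- The family `(A i)_{i ∈ I}` `δ`-evenly covers `X`. -/
def EvenCovering (I : Finset ι) (A : ι → Finset α) (X : Finset α) (δ : ℝ) : Prop :=
  letI := Classical.decEq α
  ∃ M : ℕ, 1 ≤ M ∧ (∀ p ∈ X, (I.filter fun i => p ∈ A i).card ≤ M) ∧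
    ((1 - δ) * M * X.card : ℝ) ≤ ∑ i ∈ I, ((A i).card : ℝ)

/-- The right translate `H·x`. -/
noncomputable def rtrans [Mul α] (H : Finset α) (x : α) : Finset α :=
  letI := Classical.decEq α
  H.image (· * x)

end Tiling

section Supp

variable {G : Type*} [Group G]

/-- Vectors all of whose coordinates are supported in `F`. -/
noncomputable def suppIn (d : ℕ) (F : Finset G) :
    Submodule ℂ (Fin d → MonoidAlgebra ℂ G) where
  carrier := {f | ∀ i, (f i).coeff.support ⊆ F}
  zero_mem' := fun i => by simp
  add_mem' := by
    classical
    intro f g hf hg i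
    exact Finsupp.support_add.trans (Finset.union_subset (hf i) (hg i))
  smul_mem' := fun c f hf i => (Finsupp.support_smul).trans (hf i)

end Supp
section MyBall

variable {G : Type*} [Group G]

lemma my_one_mem_wball (S : Finset G) (k : ℕ) : (1 : G) ∈ wball S k := by
  classical
  unfold wball
  exact Finset.one_mem_pow (Finset.mem_insert_self 1 S)

lemma my_wball_mono (S : Finset G) {k l : ℕ} (h : k ≤ l) : wball S k ⊆ wball S l := by
  classical
  unfold wball
  obtain ⟨m, rfl⟩ := Nat.exists_eq_add_of_le h
  rw [pow_add]
  exact Finset.subset_mul_left _ (Finset.one_mem_pow (Finset.mem_insert_self 1 S))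

lemma my_wball_mul (S : Finset G) {k l : ℕ} {a b : G} (ha : a ∈ wball S k) (hb : b ∈ wball S l) :
    a * b ∈ wball S (k + l) := by
  classical
  unfold wball at *
  rw [pow_add]
  exact Finset.mul_mem_mul ha hb

lemma my_wball_inv (S : Finset G) (hsym : ∀ s ∈ S, s⁻¹ ∈ S) :
    ∀ k : ℕ, ∀ b ∈ wball S k, b⁻¹ ∈ wball S k := by
  classical
  intro k
  induction k with
  | zero =>
    intro b hb
    unfold wball at *
    simp only [pow_zero, Finset.mem_one] at hb ⊢
    simp [hb]
  | succ n ih =>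
    intro b hb
    unfold wball at *
    rw [pow_succ] at hb
    rw [pow_succ']
    obtain ⟨x, hx, t, ht, rfl⟩ := Finset.mem_mul.1 hb
    rw [mul_inv_rev]
    refine Finset.mul_mem_mul ?_ (ih _ hx)
    rcases Finset.mem_insert.1 ht with rfl | hts
    · simpa using Finset.mem_insert_self 1 S
    · exact Finset.mem_insert_of_mem (hsym _ hts)

lemma my_exists_wball (S : Finset G) (hgen : Subgroup.closure (S : Set G) = ⊤)
    (hsym : ∀ s ∈ S, s⁻¹ ∈ S) (g : G) : ∃ L, g ∈ wball S L := by
  classical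
  have hg : g ∈ Subgroup.closure (S : Set G) := by rw [hgen]; trivial
  induction hg using Subgroup.closure_induction with
  | mem x hx =>
    refine ⟨1, ?_⟩
    unfold wball
    simpa using Finset.mem_insert_of_mem hx
  | one => exact ⟨0, my_one_mem_wball S 0⟩
  | mul x y _ _ hx hy =>
    obtain ⟨k, hk⟩ := hx
    obtain ⟨l, hl⟩ := hy
    exact ⟨k + l, my_wball_mul S hk hl⟩
  | inv x _ hx =>
    obtain ⟨k, hk⟩ := hx
    exact ⟨k, my_wball_inv S hsym k _ hk⟩

lemma my_finset_subset_wball (S : Finset G) (hgen : Subgroup.closure (S : Set G) = ⊤)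
    (hsym : ∀ s ∈ S, s⁻¹ ∈ S) (E : Finset G) : ∃ L, E ⊆ wball S L := by
  classical
  induction E using Finset.induction_on with
  | empty => exact ⟨0, by simp⟩
  | @insert a s _ ih =>
    obtain ⟨L, hL⟩ := ih
    obtain ⟨M, hM⟩ := my_exists_wball S hgen hsym a
    refine ⟨max L M, ?_⟩
    intro x hx
    rcases Finset.mem_insert.1 hx with rfl | hxs
    · exact my_wball_mono S (le_max_right L M) hM
    · exact my_wball_mono S (le_max_left L M) (hL hxs)

end MyBall
section MyBdry

variable {G : Type*} [Group G]

/-- Pointwise product with a canonical (classical) instance. -/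
noncomputable def cmul (s t : Finset G) : Finset G :=
  letI := Classical.decEq G
  s * t

/-- Set difference with a canonical (classical) instance. -/
noncomputable def csd (s t : Finset G) : Finset G :=
  letI := Classical.decEq G
  s \ t

lemma mem_cmul {s t : Finset G} {a : G} : a ∈ cmul s t ↔ ∃ b ∈ s, ∃ c ∈ t, b * c = a := by
  classical
  unfold cmul; exact Finset.mem_mul

lemma mem_csd {s t : Finset G} {a : G} : a ∈ csd s t ↔ a ∈ s ∧ a ∉ t := by
  classical
  unfold csd; exact Finset.mem_sdiff

lemma cmul_mem {s t : Finset G} {b c : G} (hb : b ∈ s) (hc : c ∈ t) : b * c ∈ cmul s t :=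
  mem_cmul.2 ⟨b, hb, c, hc, rfl⟩

lemma card_cmul_le (s t : Finset G) : (cmul s t).card ≤ s.card * t.card := by
  classical
  unfold cmul; exact Finset.card_mul_le

lemma cmul_subset_right {s₁ s₂ t : Finset G} (h : s₁ ⊆ s₂) : cmul s₁ t ⊆ cmul s₂ t := by
  classical
  unfold cmul; exact Finset.mul_subset_mul_right h

lemma cmul_subset_left {s t₁ t₂ : Finset G} (h : t₁ ⊆ t₂) : cmul s t₁ ⊆ cmul s t₂ := by
  classical
  unfold cmul; exact Finset.mul_subset_mul_left h

lemma card_csd_subset {s t : Finset G} (h : t ⊆ s) :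
    ((csd s t).card : ℝ) = (s.card : ℝ) - (t.card : ℝ) := by
  classical
  unfold csd
  rw [Finset.card_sdiff_of_subset h]
  have := Finset.card_le_card h
  push_cast [Nat.cast_sub this]
  ring

lemma card_csd_le_of_subset {s t u : Finset G} (h : csd s t ⊆ u) :
    (csd s t).card ≤ u.card := Finset.card_le_card h

lemma my_winter_subset (S : Finset G) (L : ℕ) (F : Finset G) : winter S L F ⊆ F := by
  classical
  unfold winter
  exact Finset.filter_subset _ _

lemma my_mem_winter {S : Finset G} {L : ℕ} {F : Finset G} {p : G} :
    p ∈ winter S L F ↔ p ∈ F ∧ ∀ b ∈ wball S L, b * p ∈ F := by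
  classical
  unfold winter
  simp only [Finset.mem_filter]
  constructor
  · rintro ⟨h1, h2⟩
    exact ⟨h1, fun b hb => h2 (Finset.mul_mem_mul hb (Finset.mem_singleton_self p))⟩
  · rintro ⟨h1, h2⟩
    refine ⟨h1, fun q hq => ?_⟩
    obtain ⟨b, hb, x, hx, rfl⟩ := Finset.mem_mul.1 hq
    rw [Finset.mem_singleton] at hx
    subst hx
    exact h2 b hb

lemma my_mem_wbdry {S : Finset G} {F : Finset G} {p : G} :
    p ∈ wbdry S F ↔ p ∈ F ∧ ∃ s ∈ S, s * p ∉ F := by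
  classical
  unfold wbdry
  simp only [Finset.mem_filter]

lemma my_escape (S : Finset G) (hsym : ∀ s ∈ S, s⁻¹ ∈ S) (F : Finset G) :
    ∀ L : ℕ, ∀ b ∈ wball S L, ∀ p ∈ F, b * p ∉ F → p ∈ cmul (wball S L) (wbdry S F) := by
  classical
  intro L
  induction L with
  | zero =>
    intro b hb p hp hbp
    unfold wball at hb
    simp only [pow_zero, Finset.mem_one] at hb
    subst hb
    rw [one_mul] at hbp
    exact absurd hp hbp
  | succ n ih =>
    intro b hb p hp hbp
    have hb' : b ∈ (insert (1:G) S) * (insert (1:G) S) ^ n := by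
      unfold wball at hb
      rwa [pow_succ'] at hb
    obtain ⟨s, hs, b', hb'', rfl⟩ := Finset.mem_mul.1 hb'
    have hb'ball : b' ∈ wball S n := hb''
    by_cases hcase : b' * p ∈ F
    · have hsp : s * (b' * p) ∉ F := by rwa [← mul_assoc]
      have hs1 : s ≠ 1 := by rintro rfl; rw [one_mul] at hsp; exact hsp hcase
      have hsS : s ∈ S := (Finset.mem_insert.1 hs).resolve_left hs1
      have hbd : b' * p ∈ wbdry S F := my_mem_wbdry.2 ⟨hcase, s, hsS, hsp⟩
      have hmem : p ∈ cmul (wball S n) (wbdry S F) := by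
        have hinv : b'⁻¹ ∈ wball S n := my_wball_inv S hsym n b' hb'ball
        have hpe : b'⁻¹ * (b' * p) = p := by group
        rw [← hpe]
        exact cmul_mem hinv hbd
      exact cmul_subset_right (my_wball_mono S (Nat.le_succ n)) hmem
    · exact cmul_subset_right (my_wball_mono S (Nat.le_succ n))
        (ih b' hb'ball p hp hcase)

lemma my_sdiff_winter_subset (S : Finset G) (hsym : ∀ s ∈ S, s⁻¹ ∈ S) (L : ℕ) (F : Finset G) :
    csd F (winter S L F) ⊆ cmul (wball S L) (wbdry S F) := by
  classical
  intro p hp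
  rw [mem_csd] at hp
  obtain ⟨hpF, hpn⟩ := hp
  have : ∃ b ∈ wball S L, b * p ∉ F := by
    by_contra h
    push_neg at h
    exact hpn (my_mem_winter.2 ⟨hpF, h⟩)
  obtain ⟨b, hb, hbp⟩ := this
  exact my_escape S hsym F L b hb p hpF hbp

lemma my_nbhd_sdiff_subset (S : Finset G) (L : ℕ) (F : Finset G) :
    csd (wnbhd S L F) F ⊆ cmul (wball S L) (csd F (winter S L F)) := by
  classical
  intro q hq
  rw [mem_csd] at hq
  obtain ⟨hq1, hq2⟩ := hq
  have hq1' : q ∈ cmul (wball S L) F := hq1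
  obtain ⟨b, hb, p, hp, rfl⟩ := mem_cmul.1 hq1'
  refine cmul_mem hb (mem_csd.2 ⟨hp, fun hmem => ?_⟩)
  exact hq2 ((my_mem_winter.1 hmem).2 b hb)

lemma my_card_sdiff_winter (S : Finset G) (hsym : ∀ s ∈ S, s⁻¹ ∈ S) (L : ℕ) (F : Finset G) :
    (csd F (winter S L F)).card ≤ (wball S L).card * (wbdry S F).card :=
  le_trans (Finset.card_le_card (my_sdiff_winter_subset S hsym L F)) (card_cmul_le _ _)

lemma my_card_nbhd_sdiff (S : Finset G) (L : ℕ) (F : Finset G) :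
    (csd (wnbhd S L F) F).card ≤ (wball S L).card * (csd F (winter S L F)).card :=
  le_trans (Finset.card_le_card (my_nbhd_sdiff_subset S L F)) (card_cmul_le _ _)

end MyBdry
section MyLin

variable {G : Type*} [Group G] {d : ℕ}

/-- Evaluation of all coordinates on a finite set. -/
noncomputable def evalOn (d : ℕ) (X : Finset G) :
    (Fin d → MonoidAlgebra ℂ G) →ₗ[ℂ] (Fin d → (X → ℂ)) where
  toFun f := fun i x => (f i).coeff (x : G)
  map_add' f g := by
    funext i x
    exact Finsupp.add_apply (f i).coeff (g i).coeff x
  map_smul' c f := by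
    funext i x
    show (c • f i).coeff ↑x = c * (f i).coeff ↑x
    rw [MonoidAlgebra.coeff_smul, Finsupp.smul_apply, smul_eq_mul]

lemma finrank_evalTarget (d : ℕ) (X : Finset G) :
    Module.finrank ℂ (Fin d → (X → ℂ)) = d * X.card := by
  rw [Module.finrank_pi_fintype]
  simp [Module.finrank_fintype_fun_eq_card]

lemma mem_suppIn {X : Finset G} {f : Fin d → MonoidAlgebra ℂ G} :
    f ∈ suppIn d X ↔ ∀ i, (f i).coeff.support ⊆ X := Iff.rfl

lemma evalOn_eq_zero {X : Finset G} {f : Fin d → MonoidAlgebra ℂ G}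
    (hsupp : ∀ i, (f i).coeff.support ⊆ X) (h0 : evalOn d X f = 0) : f = 0 := by
  classical
  funext i
  ext g
  by_cases hg : g ∈ X
  · have := congrFun (congrFun h0 i) ⟨g, hg⟩
    exact this
  · by_contra hne
    exact hg (hsupp i (Finsupp.mem_support_iff.2 hne))

instance suppIn_fd (X : Finset G) : FiniteDimensional ℂ (suppIn d X) := by
  classical
  apply FiniteDimensional.of_injective ((evalOn d X).comp (suppIn d X).subtype)
  intro f g hfg
  apply Subtype.ext
  have h : evalOn d X ((f : Fin d → MonoidAlgebra ℂ G) - g) = 0 := by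
    rw [map_sub]
    rw [LinearMap.comp_apply, LinearMap.comp_apply] at hfg
    simp only [Submodule.subtype_apply] at hfg
    rw [hfg, sub_self]
  have hsupp : ∀ i, (((f : Fin d → MonoidAlgebra ℂ G) - g) i).coeff.support ⊆ X := by
    intro i
    refine (Finsupp.support_sub (f := ((f : Fin d → MonoidAlgebra ℂ G) i).coeff)).trans ?_
    exact Finset.union_subset (f.2 i) (g.2 i)
  have := evalOn_eq_zero hsupp h
  exact sub_eq_zero.1 this

lemma finrank_suppIn_le (X : Finset G) :
    Module.finrank ℂ (suppIn d X) ≤ d * X.card := by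
  classical
  rw [← finrank_evalTarget d X]
  apply LinearMap.finrank_le_finrank_of_injective
    (f := (evalOn d X).comp (suppIn d X).subtype)
  intro f g hfg
  apply Subtype.ext
  have h : evalOn d X ((f : Fin d → MonoidAlgebra ℂ G) - g) = 0 := by
    rw [map_sub]
    rw [LinearMap.comp_apply, LinearMap.comp_apply] at hfg
    simp only [Submodule.subtype_apply] at hfg
    rw [hfg, sub_self]
  have hsupp : ∀ i, (((f : Fin d → MonoidAlgebra ℂ G) - g) i).coeff.support ⊆ X := by
    intro i
    refine (Finsupp.support_sub (f := ((f : Fin d → MonoidAlgebra ℂ G) i).coeff)).trans ?_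
    exact Finset.union_subset (f.2 i) (g.2 i)
  exact sub_eq_zero.1 (evalOn_eq_zero hsupp h)

variable (A : Matrix (Fin d) (Fin d) (MonoidAlgebra ℂ G))

lemma mem_kerAll {E : Finset G} {f : Fin d → MonoidAlgebra ℂ G} :
    f ∈ kerAll A E ↔ (∀ i, (f i).coeff.support ⊆ E) ∧ A.mulVec f = 0 := Iff.rfl

lemma kerAll_le_suppIn (E : Finset G) : kerAll A E ≤ suppIn d E := fun _ hf => hf.1

instance kerAll_fd (E : Finset G) : FiniteDimensional ℂ (kerAll A E) :=
  Submodule.finiteDimensional_of_le (kerAll_le_suppIn A E)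

instance VSpace_fd (T : Finset G) : FiniteDimensional ℂ (VSpace A T) :=
  Submodule.finiteDimensional_of_le (show VSpace A T ≤ suppIn d T from fun _ hf => hf.1)

lemma kerAll_mono {E E' : Finset G} (h : E ⊆ E') : kerAll A E ≤ kerAll A E' :=
  fun _ hf => ⟨fun i => (hf.1 i).trans h, hf.2⟩

lemma finrank_kerAll_mono {E E' : Finset G} (h : E ⊆ E') :
    Module.finrank ℂ (kerAll A E) ≤ Module.finrank ℂ (kerAll A E') :=
  Submodule.finrank_mono (kerAll_mono A h)

lemma finrank_kerAll_le (E : Finset G) :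
    Module.finrank ℂ (kerAll A E) ≤ d * E.card :=
  le_trans (Submodule.finrank_mono (kerAll_le_suppIn A E)) (finrank_suppIn_le E)

lemma kerAll_empty : kerAll A (∅ : Finset G) = ⊥ := by
  classical
  apply le_antisymm
  · intro f hf
    have : ∀ i, f i = 0 := by
      intro i
      ext g
      by_contra hne
      simpa using hf.1 i (Finsupp.mem_support_iff.2 hne)
    simp only [Submodule.mem_bot]
    funext i
    exact this i
  · exact bot_le

lemma kerAll_supermodular [DecidableEq G] (E E' : Finset G) :
    Module.finrank ℂ (kerAll A E) + Module.finrank ℂ (kerAll A E') ≤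
      Module.finrank ℂ (kerAll A (E ∪ E')) + Module.finrank ℂ (kerAll A (E ∩ E')) := by
  have hsup : kerAll A E ⊔ kerAll A E' ≤ kerAll A (E ∪ E') :=
    sup_le (kerAll_mono A Finset.subset_union_left) (kerAll_mono A Finset.subset_union_right)
  have hinf : kerAll A E ⊓ kerAll A E' = kerAll A (E ∩ E') := by
    apply le_antisymm
    · rintro f ⟨hf1, hf2⟩
      exact ⟨fun i => Finset.subset_inter (hf1.1 i) (hf2.1 i), hf1.2⟩
    · intro f hf
      exact ⟨⟨fun i => (hf.1 i).trans Finset.inter_subset_left, hf.2⟩,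
        ⟨fun i => (hf.1 i).trans Finset.inter_subset_right, hf.2⟩⟩
  calc Module.finrank ℂ (kerAll A E) + Module.finrank ℂ (kerAll A E')
      = Module.finrank ℂ ↥(kerAll A E ⊔ kerAll A E') +
        Module.finrank ℂ ↥(kerAll A E ⊓ kerAll A E') :=
        (Submodule.finrank_sup_add_finrank_inf_eq _ _).symm
    _ ≤ Module.finrank ℂ (kerAll A (E ∪ E')) + Module.finrank ℂ (kerAll A (E ∩ E')) := by
        gcongr
        · exact Submodule.finrank_mono hsup
        · rw [hinf]

/-- Generic rank–nullity style bound. -/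
lemma finrank_le_of_map_ker {V W : Type*} [AddCommGroup V] [Module ℂ V]
    [AddCommGroup W] [Module ℂ W] [FiniteDimensional ℂ W]
    (p q : Submodule ℂ V) [FiniteDimensional ℂ p] [FiniteDimensional ℂ q]
    (φ : V →ₗ[ℂ] W) (h : ∀ f ∈ p, φ f = 0 → f ∈ q) :
    Module.finrank ℂ p ≤ Module.finrank ℂ q + Module.finrank ℂ W := by
  set ψ := φ.comp p.subtype with hψ
  have hrn := LinearMap.finrank_range_add_finrank_ker ψ
  have h1 : Module.finrank ℂ (LinearMap.range ψ) ≤ Module.finrank ℂ W :=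
    (LinearMap.range ψ).finrank_le
  have h2 : Module.finrank ℂ (LinearMap.ker ψ) ≤ Module.finrank ℂ q := by
    have hinj : Function.Injective
        ((q.subtype.codRestrict q (fun x => x.2)).comp
          (LinearMap.id (R := ℂ) (M := q))) := by
      intro x y hxy
      exact hxy
    -- build map ker ψ → q
    let θ : LinearMap.ker ψ →ₗ[ℂ] q :=
      LinearMap.codRestrict q (p.subtype.comp (LinearMap.ker ψ).subtype)
        (fun x => h _ x.1.2 x.2)
    have hθ : Function.Injective θ := by
      intro x y hxy
      apply Subtype.ext
      apply Subtype.ext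
      have := congrArg (Subtype.val : q → _) hxy
      simpa [θ] using this
    exact LinearMap.finrank_le_finrank_of_injective hθ
  omega

end MyLin
section MyTrans

variable {G : Type*} [Group G] {d : ℕ}

lemma my_mulVec_apply (A : Matrix (Fin d) (Fin d) (MonoidAlgebra ℂ G))
    (f : Fin d → MonoidAlgebra ℂ G) (i : Fin d) :
    A.mulVec f i = ∑ j, A i j * f j := rfl

lemma my_support_mulVec {S : Finset G} {w : ℕ} {A : Matrix (Fin d) (Fin d) (MonoidAlgebra ℂ G)}
    (hA : ∀ i j, (A i j).coeff.support ⊆ wball S w) {T : Finset G}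
    {f : Fin d → MonoidAlgebra ℂ G} (hf : ∀ j, (f j).coeff.support ⊆ T) (i : Fin d) :
    (A.mulVec f i).coeff.support ⊆ wnbhd S w T := by
  classical
  rw [my_mulVec_apply]
  intro g hg
  rw [MonoidAlgebra.coeff_sum] at hg
  obtain ⟨j, _, hj⟩ := Finsupp.mem_support_finset_sum g hg
  have := MonoidAlgebra.support_coeff_mul_subset (A i j) (f j) hj
  obtain ⟨x, hx, y, hy, rfl⟩ := Finset.mem_mul.1 this
  have : x * y ∈ cmul (wball S w) T := cmul_mem (hA i j hx) (hf j hy)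
  exact this

lemma kerAll_le_VSpace (A : Matrix (Fin d) (Fin d) (MonoidAlgebra ℂ G)) (T : Finset G) :
    kerAll A T ≤ VSpace A T := by
  rintro f ⟨hf1, hf2⟩
  refine ⟨hf1, fun i g _ => ?_⟩
  rw [hf2]
  rfl

lemma finrank_kerAll_le_VSpace (A : Matrix (Fin d) (Fin d) (MonoidAlgebra ℂ G)) (T : Finset G) :
    Module.finrank ℂ (kerAll A T) ≤ Module.finrank ℂ (VSpace A T) :=
  Submodule.finrank_mono (kerAll_le_VSpace A T)

lemma finrank_VSpace_le {S : Finset G} {w : ℕ} {A : Matrix (Fin d) (Fin d) (MonoidAlgebra ℂ G)}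
    (hA : ∀ i j, (A i j).coeff.support ⊆ wball S w) (T : Finset G) :
    Module.finrank ℂ (VSpace A T) ≤
      Module.finrank ℂ (kerAll A T) + d * (csd (wnbhd S w T) T).card := by
  classical
  set X := csd (wnbhd S w T) T with hX
  have := finrank_le_of_map_ker (VSpace A T) (kerAll A T)
    ((evalOn d X).comp (mulVecL A)) ?_
  · rwa [finrank_evalTarget d X] at this
  · rintro f ⟨hf1, hf2⟩ hker
    refine ⟨hf1, ?_⟩
    funext i
    ext g
    show ((A.mulVec f) i).coeff g = (0 : ℂ)
    by_cases hgT : g ∈ T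
    · exact hf2 i g hgT
    · by_cases hgX : g ∈ X
      · have := congrFun (congrFun hker i) ⟨g, hgX⟩
        exact this
      · have hgn : g ∉ wnbhd S w T := by
          intro hmem
          exact hgX (mem_csd.2 ⟨hmem, hgT⟩)
        have hsupp := my_support_mulVec hA hf1 i
        by_contra hne
        exact hgn (hsupp (Finsupp.mem_support_iff.2 hne))

/-- Right multiplication by `single g 1` as a linear map. -/
noncomputable def rmulL (g : G) :
    (Fin d → MonoidAlgebra ℂ G) →ₗ[ℂ] (Fin d → MonoidAlgebra ℂ G) where
  toFun f := fun i => f i * MonoidAlgebra.single g 1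
  map_add' f g' := by funext i; show (f i + g' i) * _ = _; rw [add_mul]; rfl
  map_smul' c f := by
    funext i
    show (c • f i) * _ = c • (f i * _)
    rw [smul_mul_assoc]

lemma rmulL_rmulL (g : G) (f : Fin d → MonoidAlgebra ℂ G) :
    rmulL (d := d) g⁻¹ (rmulL g f) = f := by
  funext i
  show (f i * MonoidAlgebra.single g 1) * MonoidAlgebra.single g⁻¹ 1 = f i
  rw [mul_assoc, MonoidAlgebra.single_mul_single, mul_inv_cancel, mul_one,
    ← MonoidAlgebra.one_def, mul_one]

lemma rmulL_injective (g : G) : Function.Injective (rmulL (d := d) (G := G) g) := by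
  intro f f' h
  have := congrArg (rmulL (d := d) g⁻¹) h
  rwa [rmulL_rmulL, rmulL_rmulL] at this

lemma mulVec_rmulL (A : Matrix (Fin d) (Fin d) (MonoidAlgebra ℂ G)) (g : G)
    (f : Fin d → MonoidAlgebra ℂ G) :
    A.mulVec (rmulL g f) = rmulL g (A.mulVec f) := by
  funext i
  show ∑ j, A i j * (f j * MonoidAlgebra.single g 1) =
    (∑ j, A i j * f j) * MonoidAlgebra.single g 1
  rw [Finset.sum_mul]
  exact Finset.sum_congr rfl fun j _ => (mul_assoc _ _ _).symm

lemma mem_rtrans {E : Finset G} {g a : G} : a ∈ rtrans E g ↔ ∃ e ∈ E, e * g = a := by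
  classical
  unfold rtrans
  exact Finset.mem_image

lemma rtrans_rtrans (E : Finset G) (g : G) : rtrans (rtrans E g) g⁻¹ = E := by
  classical
  ext x
  simp only [mem_rtrans]
  constructor
  · rintro ⟨e, ⟨e', he', rfl⟩, rfl⟩
    simpa [mul_assoc] using he'
  · intro hx
    exact ⟨x * g, ⟨x, hx, rfl⟩, by group⟩

lemma support_rmul (x : MonoidAlgebra ℂ G) (g : G) :
    (x * MonoidAlgebra.single g 1).coeff.support = x.coeff.support.map (mulRightEmbedding g) :=
  MonoidAlgebra.support_coeff_mul_single x 1 (fun y => by simp) g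

lemma rmulL_mem_kerAll {A : Matrix (Fin d) (Fin d) (MonoidAlgebra ℂ G)} {E : Finset G} {g : G}
    {f : Fin d → MonoidAlgebra ℂ G} (hf : f ∈ kerAll A E) :
    rmulL g f ∈ kerAll A (rtrans E g) := by
  classical
  constructor
  · intro i
    show (f i * MonoidAlgebra.single g 1).coeff.support ⊆ _
    rw [support_rmul]
    intro a ha
    obtain ⟨e, he, rfl⟩ := Finset.mem_map.1 ha
    rw [mulRightEmbedding_apply]
    exact mem_rtrans.2 ⟨e, hf.1 i he, rfl⟩
  · rw [mulVec_rmulL, hf.2, map_zero]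

lemma finrank_kerAll_rtrans (A : Matrix (Fin d) (Fin d) (MonoidAlgebra ℂ G)) (E : Finset G)
    (g : G) : Module.finrank ℂ (kerAll A (rtrans E g)) = Module.finrank ℂ (kerAll A E) := by
  have key : ∀ (E' : Finset G) (g' : G),
      Module.finrank ℂ (kerAll A E') ≤ Module.finrank ℂ (kerAll A (rtrans E' g')) := by
    intro E' g'
    let θ : kerAll A E' →ₗ[ℂ] kerAll A (rtrans E' g') :=
      LinearMap.codRestrict _ ((rmulL g').comp (kerAll A E').subtype)
        (fun x => rmulL_mem_kerAll x.2)
    have hθ : Function.Injective θ := by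
      intro x y hxy
      apply Subtype.ext
      apply rmulL_injective g'
      have := congrArg (Subtype.val : (kerAll A (rtrans E' g')) → _) hxy
      simpa [θ] using this
    exact LinearMap.finrank_le_finrank_of_injective hθ
  refine le_antisymm ?_ (key E g)
  have := key (rtrans E g) g⁻¹
  rwa [rtrans_rtrans] at this

end MyTrans
section MyCover

variable {G : Type*} [Group G] {d : ℕ}

/-- Real-valued dimension function. -/
noncomputable def hdim (A : Matrix (Fin d) (Fin d) (MonoidAlgebra ℂ G)) (E : Finset G) : ℝ :=
  (Module.finrank ℂ (kerAll A E) : ℝ)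

variable (A : Matrix (Fin d) (Fin d) (MonoidAlgebra ℂ G))

lemma hdim_nonneg (E : Finset G) : 0 ≤ hdim A E := Nat.cast_nonneg _

lemma hdim_mono {E E' : Finset G} (h : E ⊆ E') : hdim A E ≤ hdim A E' :=
  Nat.cast_le.2 (finrank_kerAll_mono A h)

lemma hdim_empty : hdim A (∅ : Finset G) = 0 := by
  unfold hdim
  rw [kerAll_empty]
  simp

lemma hdim_le_card (E : Finset G) : hdim A E ≤ (d : ℝ) * E.card := by
  unfold hdim
  have := finrank_kerAll_le A E
  exact_mod_cast this

lemma hdim_rtrans (E : Finset G) (g : G) : hdim A (rtrans E g) = hdim A E := by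
  unfold hdim
  rw [finrank_kerAll_rtrans]

lemma hdim_supermodular [DecidableEq G] (E E' : Finset G) :
    hdim A E + hdim A E' ≤ hdim A (E ∪ E') + hdim A (E ∩ E') := by
  unfold hdim
  exact_mod_cast kerAll_supermodular A E E'

open scoped Classical in
lemma cover_ineq (M : ℕ) (D : Finset G) :
    ∀ (n : ℕ) (As : G → Finset G) (Y : Finset G), Y.card = n →
      (∀ g ∈ D, As g ⊆ Y) → (∀ y ∈ Y, (D.filter fun g => y ∈ As g).card = M) →
      ∑ g ∈ D, hdim A (As g) ≤ (M : ℝ) * hdim A Y := by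
  classical
  intro n
  induction n with
  | zero =>
    intro As Y hcard hsub _
    rw [Finset.card_eq_zero] at hcard
    subst hcard
    have : ∀ g ∈ D, hdim A (As g) = 0 := by
      intro g hg
      rw [Finset.subset_empty.1 (hsub g hg), hdim_empty]
    rw [Finset.sum_congr rfl this, Finset.sum_const, smul_zero, hdim_empty, mul_zero]
  | succ n ih =>
    intro As Y hcard hsub hmult
    have hne : Y.Nonempty := by
      rw [← Finset.card_pos, hcard]; omega
    obtain ⟨y, hy⟩ := hne
    set Y' := Y.erase y with hY'
    have hcard' : Y'.card = n := by
      rw [hY', Finset.card_erase_of_mem hy, hcard]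
      omega
    set As' := fun g => (As g).erase y with hAs'
    have hsub' : ∀ g ∈ D, As' g ⊆ Y' := fun g hg => Finset.erase_subset_erase y (hsub g hg)
    have hmult' : ∀ y' ∈ Y', (D.filter fun g => y' ∈ As' g).card = M := by
      intro y' hy'
      have hyne : y' ≠ y := (Finset.mem_erase.1 hy').1
      have : (D.filter fun g => y' ∈ As' g) = (D.filter fun g => y' ∈ As g) := by
        apply Finset.filter_congr
        intro g _
        simp [hAs', Finset.mem_erase, hyne]
      rw [this]
      exact hmult y' (Finset.mem_erase.1 hy').2
    have hIH := ih As' Y' hcard' hsub' hmult'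
    have hterm : ∀ g ∈ D, hdim A (As g) ≤
        hdim A (As' g) + (if y ∈ As g then hdim A Y - hdim A Y' else 0) := by
      intro g hg
      by_cases hyg : y ∈ As g
      · have hunion : As g ∪ Y' = Y := by
          apply Finset.Subset.antisymm
          · exact Finset.union_subset (hsub g hg) (Finset.erase_subset y Y)
          · intro z hz
            by_cases hzy : z = y
            · subst hzy; exact Finset.mem_union_left _ hyg
            · exact Finset.mem_union_right _ (Finset.mem_erase.2 ⟨hzy, hz⟩)
        have hinter : As g ∩ Y' = As' g := by
          ext z
          simp only [Finset.mem_inter, hY', hAs', Finset.mem_erase]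
          constructor
          · rintro ⟨h1, h2, _⟩; exact ⟨h2, h1⟩
          · rintro ⟨h1, h2⟩; exact ⟨h2, h1, hsub g hg h2⟩
        have := hdim_supermodular A (As g) Y'
        rw [hunion, hinter] at this
        rw [if_pos hyg]
        linarith
      · have heq : As' g = As g := by
          simp only [hAs']
          exact Finset.erase_eq_of_notMem hyg
        rw [if_neg hyg, heq, add_zero]
    calc ∑ g ∈ D, hdim A (As g)
        ≤ ∑ g ∈ D, (hdim A (As' g) + (if y ∈ As g then hdim A Y - hdim A Y' else 0)) :=
          Finset.sum_le_sum hterm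
      _ = (∑ g ∈ D, hdim A (As' g)) +
          ∑ g ∈ D, (if y ∈ As g then hdim A Y - hdim A Y' else 0) := Finset.sum_add_distrib
      _ = (∑ g ∈ D, hdim A (As' g)) + (M : ℝ) * (hdim A Y - hdim A Y') := by
          congr 1
          rw [Finset.sum_ite, Finset.sum_const_zero, add_zero, Finset.sum_const,
            hmult y hy]
          simp [nsmul_eq_mul]
      _ ≤ (M : ℝ) * hdim A Y' + (M : ℝ) * (hdim A Y - hdim A Y') := by linarith
      _ = (M : ℝ) * hdim A Y := by ring

end MyCover
section MyKey

variable {G : Type*} [Group G] {d : ℕ}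
variable (A : Matrix (Fin d) (Fin d) (MonoidAlgebra ℂ G))

open scoped Classical in
lemma key_ineq {S : Finset G} {L : ℕ} {E : Finset G} (hE : E.Nonempty)
    (hEL : E ⊆ wball S L) (Y : Finset G) :
    ((winter S L Y).card : ℝ) * hdim A E ≤ (E.card : ℝ) * hdim A Y := by
  classical
  set D : Finset G := E⁻¹ * Y with hD
  set As : G → Finset G := fun g => rtrans E g ∩ Y with hAs
  have hsub : ∀ g ∈ D, As g ⊆ Y := fun g _ => Finset.inter_subset_right
  have hmult : ∀ y ∈ Y, (D.filter fun g => y ∈ As g).card = E.card := by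
    intro y hyY
    have himg : (D.filter fun g => y ∈ As g) = E.image (fun e => e⁻¹ * y) := by
      ext g
      simp only [Finset.mem_filter, Finset.mem_image]
      constructor
      · rintro ⟨hgD, hgAs⟩
        obtain ⟨e, he, heg⟩ := mem_rtrans.1 (Finset.mem_inter.1 hgAs).1
        exact ⟨e, he, by rw [← heg]; group⟩
      · rintro ⟨e, he, rfl⟩
        refine ⟨Finset.mul_mem_mul (Finset.inv_mem_inv he) hyY, ?_⟩
        exact Finset.mem_inter.2 ⟨mem_rtrans.2 ⟨e, he, by group⟩, hyY⟩
    rw [himg]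
    apply Finset.card_image_of_injective
    exact (mul_left_injective y).comp inv_injective
  have hupper := cover_ineq A E.card D Y.card As Y rfl hsub hmult
  have hws : winter S L Y ⊆ D := by
    intro p hp
    obtain ⟨e, he⟩ := hE
    have hep : e * p ∈ Y := (my_mem_winter.1 hp).2 e (hEL he)
    have hpe : p = e⁻¹ * (e * p) := by group
    rw [hpe]
    exact Finset.mul_mem_mul (Finset.inv_mem_inv he) hep
  have hval : ∀ p ∈ winter S L Y, hdim A (As p) = hdim A E := by
    intro p hp
    have hsubY : rtrans E p ⊆ Y := by
      intro a ha
      obtain ⟨e, he, rfl⟩ := mem_rtrans.1 ha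
      exact (my_mem_winter.1 hp).2 e (hEL he)
    have : As p = rtrans E p := by
      simp only [hAs]
      exact Finset.inter_eq_left.2 hsubY
    rw [this, hdim_rtrans]
  have hlower : ((winter S L Y).card : ℝ) * hdim A E ≤ ∑ g ∈ D, hdim A (As g) := by
    calc ((winter S L Y).card : ℝ) * hdim A E
        = ∑ p ∈ winter S L Y, hdim A (As p) := by
          rw [Finset.sum_congr rfl hval, Finset.sum_const, nsmul_eq_mul]
      _ ≤ ∑ g ∈ D, hdim A (As g) :=
          Finset.sum_le_sum_of_subset_of_nonneg hws (fun g _ _ => hdim_nonneg A (As g))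
  exact hlower.trans hupper

end MyKey
section MyLimit

variable {G : Type*} [Group G] {d : ℕ}

/-- The set of normalized dimensions. -/
noncomputable def hsupSet (A : Matrix (Fin d) (Fin d) (MonoidAlgebra ℂ G)) : Set ℝ :=
  {x | ∃ E : Finset G, E.Nonempty ∧ x = hdim A E / E.card}

variable (A : Matrix (Fin d) (Fin d) (MonoidAlgebra ℂ G))

lemma hsupSet_nonempty : (hsupSet A).Nonempty :=
  ⟨hdim A {1} / ({1} : Finset G).card, {1}, ⟨1, Finset.mem_singleton_self 1⟩, rfl⟩

lemma hsupSet_bddAbove : BddAbove (hsupSet A) := by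
  refine ⟨d, ?_⟩
  rintro x ⟨E, hE, rfl⟩
  have hc : (0 : ℝ) < E.card := by exact_mod_cast Finset.card_pos.2 hE
  rw [div_le_iff₀ hc]
  exact hdim_le_card A E

lemma hsupSet_mem_nonneg {x : ℝ} (hx : x ∈ hsupSet A) : 0 ≤ x := by
  obtain ⟨E, hE, rfl⟩ := hx
  have hc : (0 : ℝ) ≤ E.card := Nat.cast_nonneg _
  exact div_nonneg (hdim_nonneg A E) hc

lemma hsup_nonneg : 0 ≤ sSup (hsupSet A) := by
  obtain ⟨x, hx⟩ := hsupSet_nonempty A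
  exact le_trans (hsupSet_mem_nonneg A hx) (le_csSup (hsupSet_bddAbove A) hx)

lemma tempered_tendsto_hdim (S : Finset G) (hS : IsSymmGen S)
    (T : ℕ → Finset G) (hne : ∀ k, (T k).Nonempty)
    (htemp : ∀ L : ℕ, Tendsto (fun k => ((winter S L (T k)).card : ℝ) / ((T k).card : ℝ))
      atTop (𝓝 1)) :
    Tendsto (fun k => hdim A (T k) / ((T k).card : ℝ)) atTop (𝓝 (sSup (hsupSet A))) := by
  set s := sSup (hsupSet A) with hs
  have hs0 : 0 ≤ s := hsup_nonneg A
  have hub : ∀ k, hdim A (T k) / ((T k).card : ℝ) ≤ s := fun k =>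
    le_csSup (hsupSet_bddAbove A) ⟨T k, hne k, rfl⟩
  rw [Metric.tendsto_atTop]
  intro ε hε
  have hlt : s - ε / 2 < sSup (hsupSet A) := by rw [← hs]; linarith
  obtain ⟨x, hxmem, hxgt⟩ := exists_lt_of_lt_csSup (hsupSet_nonempty A) hlt
  have hxs : x ≤ s := le_csSup (hsupSet_bddAbove A) hxmem
  have hx0 : 0 ≤ x := hsupSet_mem_nonneg A hxmem
  obtain ⟨E, hEne, rfl⟩ := hxmem
  obtain ⟨L, hEL⟩ := my_finset_subset_wball S hS.2 hS.1 E
  set δ : ℝ := ε / (2 * (s + 1)) with hδ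
  have hδ0 : 0 < δ := by
    apply div_pos hε
    linarith
  have hδs : δ * (s + 1) = ε / 2 := by
    rw [hδ]
    field_simp
  obtain ⟨N, hN⟩ := (Metric.tendsto_atTop.1 (htemp L)) δ hδ0
  refine ⟨N, fun k hk => ?_⟩
  set u := hdim A (T k) / ((T k).card : ℝ) with hu
  set r := ((winter S L (T k)).card : ℝ) / ((T k).card : ℝ) with hr
  have hrk := hN k hk
  rw [Real.dist_eq] at hrk
  have hr1 : 1 - δ ≤ r := by
    have := abs_lt.1 hrk
    linarith [this.1]
  have hTk : (0 : ℝ) < ((T k).card : ℝ) := by exact_mod_cast Finset.card_pos.2 (hne k)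
  have hEc : (0 : ℝ) < (E.card : ℝ) := by exact_mod_cast Finset.card_pos.2 hEne
  have hkey := key_ineq A hEne hEL (T k)
  have hlow : r * (hdim A E / (E.card : ℝ)) ≤ u := by
    rw [hr, hu, div_mul_div_comm, div_le_div_iff₀ (by positivity) hTk]
    calc ((winter S L (T k)).card : ℝ) * hdim A E * ((T k).card : ℝ)
        ≤ ((E.card : ℝ) * hdim A (T k)) * ((T k).card : ℝ) := by
          apply mul_le_mul_of_nonneg_right hkey hTk.le
      _ = hdim A (T k) * (((T k).card : ℝ) * (E.card : ℝ)) := by ring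
  have hr0 : 0 ≤ r := by positivity
  have hprod : (1 - δ) * (hdim A E / (E.card : ℝ)) ≤ r * (hdim A E / (E.card : ℝ)) :=
    mul_le_mul_of_nonneg_right hr1 hx0
  have hus : u ≤ s := hub k
  rw [Real.dist_eq, abs_sub_comm, abs_of_nonneg (by linarith : (0:ℝ) ≤ s - u)]
  -- show s - u < ε
  set x := hdim A E / (E.card : ℝ)
  have hδx : δ * x ≤ δ * s := mul_le_mul_of_nonneg_left hxs hδ0.le
  nlinarith [hδx, hδs, hδ0.le, hs0]

end MyLimit
section MyFinal

variable {G : Type*} [Group G] {d : ℕ}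

lemma dimV_tendsto (S : Finset G) (hS : IsSymmGen S) (w : ℕ)
    (A : Matrix (Fin d) (Fin d) (MonoidAlgebra ℂ G))
    (hA : ∀ i j, (A i j).coeff.support ⊆ wball S w)
    (T : ℕ → Finset G) (hne : ∀ k, (T k).Nonempty)
    (htemp : ∀ L : ℕ, Tendsto (fun k => ((winter S L (T k)).card : ℝ) / ((T k).card : ℝ))
      atTop (𝓝 1)) :
    Tendsto (fun k => (Module.finrank ℂ (VSpace A (T k)) : ℝ) / ((T k).card : ℝ))
      atTop (𝓝 (sSup (hsupSet A))) := by
  have h1 := tempered_tendsto_hdim A S hS T hne htemp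
  have hTk : ∀ k, (0 : ℝ) < ((T k).card : ℝ) := fun k => by
    exact_mod_cast Finset.card_pos.2 (hne k)
  set u : ℕ → ℝ := fun k => hdim A (T k) / ((T k).card : ℝ) with hu
  set v : ℕ → ℝ := fun k => (Module.finrank ℂ (VSpace A (T k)) : ℝ) / ((T k).card : ℝ) with hv
  set r : ℕ → ℝ := fun k => ((winter S w (T k)).card : ℝ) / ((T k).card : ℝ) with hrdef
  have hlow : ∀ k, u k ≤ v k := by
    intro k
    simp only [hu, hv]
    have hnum : hdim A (T k) ≤ (Module.finrank ℂ (VSpace A (T k)) : ℝ) := by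
      unfold hdim
      exact_mod_cast finrank_kerAll_le_VSpace A (T k)
    gcongr
  have hup : ∀ k, v k ≤ u k + (d : ℝ) * ((wball S w).card : ℝ) * (1 - r k) := by
    intro k
    have hupN : (Module.finrank ℂ (VSpace A (T k)) : ℝ) ≤
        hdim A (T k) + (d : ℝ) * ((csd (wnbhd S w (T k)) (T k)).card : ℝ) := by
      have := finrank_VSpace_le hA (T k)
      unfold hdim
      exact_mod_cast this
    have hcard1 : ((csd (wnbhd S w (T k)) (T k)).card : ℝ) ≤
        ((wball S w).card : ℝ) * ((csd (T k) (winter S w (T k))).card : ℝ) := by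
      exact_mod_cast my_card_nbhd_sdiff S w (T k)
    have hcard2 : ((csd (T k) (winter S w (T k))).card : ℝ) =
        ((T k).card : ℝ) - ((winter S w (T k)).card : ℝ) :=
      card_csd_subset (my_winter_subset S w (T k))
    have step : (Module.finrank ℂ (VSpace A (T k)) : ℝ) ≤
        hdim A (T k) + (d : ℝ) * ((wball S w).card : ℝ) *
          (((T k).card : ℝ) - ((winter S w (T k)).card : ℝ)) := by
      rw [← hcard2]
      have hd0 : (0:ℝ) ≤ (d : ℝ) := Nat.cast_nonneg d
      nlinarith [hcard1]
    have hTkne : ((T k).card : ℝ) ≠ 0 := ne_of_gt (hTk k)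
    have hrhs : (hdim A (T k) + (d : ℝ) * ((wball S w).card : ℝ) *
          (((T k).card : ℝ) - ((winter S w (T k)).card : ℝ))) / ((T k).card : ℝ) =
        u k + (d : ℝ) * ((wball S w).card : ℝ) * (1 - r k) := by
      simp only [hu, hrdef]
      field_simp
    calc v k ≤ (hdim A (T k) + (d : ℝ) * ((wball S w).card : ℝ) *
          (((T k).card : ℝ) - ((winter S w (T k)).card : ℝ))) / ((T k).card : ℝ) := by
          simp only [hv]
          gcongr
      _ = u k + (d : ℝ) * ((wball S w).card : ℝ) * (1 - r k) := hrhs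
  have hz : Tendsto (fun k => v k - u k) atTop (𝓝 0) := by
    apply squeeze_zero (g := fun k => (d : ℝ) * ((wball S w).card : ℝ) * (1 - r k))
      (fun k => by linarith [hlow k])
      (fun k => by
        show v k - u k ≤ (d : ℝ) * ((wball S w).card : ℝ) * (1 - r k)
        linarith [hup k])
    have hone : Tendsto (fun _ : ℕ => (1 : ℝ)) atTop (𝓝 1) := tendsto_const_nhds
    have h2 : Tendsto (fun k => 1 - r k) atTop (𝓝 0) := by
      have := hone.sub (htemp w)
      simpa using this
    have h3 := h2.const_mul ((d : ℝ) * ((wball S w).card : ℝ))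
    simpa using h3
  have := h1.add hz
  rw [add_zero] at this
  have hfun : (fun k => u k + (v k - u k)) = v := by funext k; ring
  rwa [hfun] at this

lemma folner_tempered (S : Finset G) (hS : IsSymmGen S) (F : ℕ → Finset G)
    (hF : IsFolnerExhaustion S F) (L : ℕ) :
    Tendsto (fun n => ((winter S L (F n)).card : ℝ) / ((F n).card : ℝ)) atTop (𝓝 1) := by
  have hne : ∀ n, (F n).Nonempty := fun n => ⟨1, hF.2.1 (Nat.zero_le n) hF.1⟩
  have hpos : ∀ n, (0 : ℝ) < ((F n).card : ℝ) := fun n => by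
    exact_mod_cast Finset.card_pos.2 (hne n)
  have heq : ∀ n, ((winter S L (F n)).card : ℝ) / ((F n).card : ℝ) =
      1 - ((csd (F n) (winter S L (F n))).card : ℝ) / ((F n).card : ℝ) := by
    intro n
    rw [card_csd_subset (my_winter_subset S L (F n))]
    field_simp
    ring
  have hz : Tendsto (fun n => ((csd (F n) (winter S L (F n))).card : ℝ) / ((F n).card : ℝ))
      atTop (𝓝 0) := by
    apply squeeze_zero (fun n => by positivity)
      (g := fun n => ((wball S L).card : ℝ) * (((wbdry S (F n)).card : ℝ) / ((F n).card : ℝ)))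
    · intro n
      have hb : ((csd (F n) (winter S L (F n))).card : ℝ) ≤
          ((wball S L).card : ℝ) * ((wbdry S (F n)).card : ℝ) := by
        exact_mod_cast my_card_sdiff_winter S hS.1 L (F n)
      calc ((csd (F n) (winter S L (F n))).card : ℝ) / ((F n).card : ℝ)
          ≤ ((wball S L).card : ℝ) * ((wbdry S (F n)).card : ℝ) / ((F n).card : ℝ) := by
            gcongr
        _ = ((wball S L).card : ℝ) * (((wbdry S (F n)).card : ℝ) / ((F n).card : ℝ)) := by
            rw [mul_div_assoc]
    · have := (hF.2.2.2).const_mul ((wball S L).card : ℝ)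
      simpa using this
  have hone : Tendsto (fun _ : ℕ => (1 : ℝ)) atTop (𝓝 1) := tendsto_const_nhds
  have := hone.sub hz
  rw [sub_zero] at this
  have hfun : (fun n => 1 - ((csd (F n) (winter S L (F n))).card : ℝ) / ((F n).card : ℝ)) =
      (fun n => ((winter S L (F n)).card : ℝ) / ((F n).card : ℝ)) := by
    funext n
    rw [heq n]
  rwa [hfun] at this

end MyFinal
theorem dim_convergence_along_tempered_sequences {G : Type*} [Group G] (S : Finset G)
    (hS : IsSymmGen S) (d w : ℕ) (A : Matrix (Fin d) (Fin d) (MonoidAlgebra ℂ G))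
    (hA : ∀ i j, (A i j).coeff.support ⊆ wball S w)
    (F : ℕ → Finset G) (hF : IsFolnerExhaustion S F) (c : ℝ)
    (hc : Tendsto (fun n => (Module.finrank ℂ (VSpace A (F n)) : ℝ) / ((F n).card : ℝ))
      atTop (𝓝 c))
    (Y : ℕ → Finset G) (hY : ∀ k, (Y k).Nonempty)
    (hYint : ∀ L : ℕ,
      Tendsto (fun k => ((winter S L (Y k)).card : ℝ) / ((Y k).card : ℝ)) atTop (𝓝 1)) :
    Tendsto (fun k => (Module.finrank ℂ (VSpace A (Y k)) : ℝ) / ((Y k).card : ℝ)) atTop (𝓝 c) := by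
  have hFne : ∀ n, (F n).Nonempty := fun n => ⟨1, hF.2.1 (Nat.zero_le n) hF.1⟩
  have hFtend := dimV_tendsto S hS w A hA F hFne (folner_tempered S hS F hF)
  have hc' : c = sSup (hsupSet A) := tendsto_nhds_unique hc hFtend
  rw [hc']
  exact dimV_tendsto S hS w A hA Y hY hYint
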